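/- Character evaluation at z = i: for |q|<1 and r ∈ {0,1,2,3,4,5}, with χ_{2r}^{(5,12)}(z;q) := z^{-r} q^{-1/8 + 5(2r+1)^2/48} [ j(-q^{5(2r+1)+60} z^{-12}; q^{120}) - z^{2r+1} j(-q^{-5(2r+1)+60} z^{-12}; q^{120}) ] / j(z;q), one has χ_{2r}^{(5,12)}(i;q) = (-1)^{κ(r)} q^{-1/8 + 5(2r+1)^2/48} j(-q^{10r+65}; q^{120}) · J_2/(J_1 J_4), where κ(r)=0 for r∈{0,1,4,5} and κ(r)=1 for r∈{2,3}. -/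

import Mathlib

open Complex

/-- Infinite q-Pochhammer symbol `(x;q)_∞ = ∏_{i≥0} (1 - q^i x)`. -/
noncomputable def qPoch (x q : ℂ) : ℂ := ∏' i : ℕ, (1 - q ^ i * x)

/-- Theta function `j(x;q) = (x;q)_∞ (q/x;q)_∞ (q;q)_∞`. -/
noncomputable def jtheta (x q : ℂ) : ℂ := qPoch x q * qPoch (q / x) q * qPoch q q

/-- Fractional power of `q = e^{2πiτ}`: `q^α := e^{2πiατ}`. -/
noncomputable def qpow (τ α : ℂ) : ℂ := Complex.exp (2 * Real.pi * Complex.I * α * τ)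

/-- The sign exponent κ: `κ(r) = 1` if `r ∈ {2,3}`, and `κ(r) = 0` otherwise. -/
def kappa (r : ℕ) : ℕ := if r = 2 ∨ r = 3 then 1 else 0

/-- The admissible character `χ_{2r}^{(5,12)}(z;q)` in Weyl–Kac theta-quotient form,
with `q = e^{2πiτ}`. -/
noncomputable def chi512 (τ : ℂ) (r : ℕ) (z : ℂ) : ℂ :=
  let q : ℂ := qpow τ 1
  z ^ (-(r : ℤ)) * qpow τ (-(1 / 8) + 5 * (2 * r + 1) ^ 2 / 48)
    * (jtheta (-q ^ (5 * (2 * (r : ℤ) + 1) + 60) * z ^ (-12 : ℤ)) (q ^ 120)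
        - z ^ (2 * r + 1)
            * jtheta (-q ^ (-5 * (2 * (r : ℤ) + 1) + 60) * z ^ (-12 : ℤ)) (q ^ 120))
    / jtheta z q

set_option maxHeartbeats 1000000

section AuxChi512

open Filter

lemma one_sub_ne_of_norm_lt {z : ℂ} (h : ‖z‖ < 1) : (1 : ℂ) - z ≠ 0 := by
  intro hz
  have : z = 1 := by linear_combination -hz
  simp [this] at h

lemma summable_log_aux {x q : ℂ} (hq : ‖q‖ < 1) :
    Summable fun n : ℕ => Complex.log (1 - q ^ n * x) := by
  have hgeo : Summable fun n : ℕ => (3 / 2 : ℝ) * (‖q‖ ^ n * ‖x‖) :=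
    ((summable_geometric_of_lt_one (norm_nonneg q) hq).mul_right ‖x‖).mul_left _
  apply Summable.of_norm_bounded_eventually_nat hgeo
  have ht : Tendsto (fun n : ℕ => ‖q‖ ^ n * ‖x‖) atTop (nhds 0) := by
    simpa using (tendsto_pow_atTop_nhds_zero_of_lt_one (norm_nonneg q) hq).mul_const ‖x‖
  filter_upwards [ht.eventually_le_const (by norm_num : (0:ℝ) < 1/2)] with n hn
  have hnorm : ‖-(q ^ n * x)‖ = ‖q‖ ^ n * ‖x‖ := by
    rw [norm_neg, norm_mul, norm_pow]
  calc ‖Complex.log (1 - q ^ n * x)‖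
      = ‖Complex.log (1 + -(q ^ n * x))‖ := by ring_nf
    _ ≤ 3 / 2 * ‖-(q ^ n * x)‖ :=
        Complex.norm_log_one_add_half_le_self (by rw [hnorm]; exact hn)
    _ = 3 / 2 * (‖q‖ ^ n * ‖x‖) := by rw [hnorm]

lemma multipliable_aux {x q : ℂ} (hq : ‖q‖ < 1) (hx : ∀ i : ℕ, 1 - q ^ i * x ≠ 0) :
    Multipliable fun i : ℕ => 1 - q ^ i * x :=
  Complex.multipliable_of_summable_log (summable_log_aux hq)

lemma qPoch_ne_zero {x q : ℂ} (hq : ‖q‖ < 1) (hx : ∀ i : ℕ, 1 - q ^ i * x ≠ 0) :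
    qPoch x q ≠ 0 := by
  have h : Complex.exp (∑' i : ℕ, Complex.log (1 - q ^ i * x)) = ∏' i : ℕ, (1 - q ^ i * x) :=
    Complex.cexp_tsum_eq_tprod hx (summable_log_aux hq)
  rw [qPoch, ← h]
  exact Complex.exp_ne_zero _

lemma qPoch_shift {x q : ℂ} (hq : ‖q‖ < 1) (hx : ∀ i : ℕ, 1 - q ^ i * x ≠ 0) :
    qPoch x q = (1 - x) * qPoch (q * x) q := by
  have hx' : ∀ i : ℕ, 1 - q ^ i * (q * x) ≠ 0 := fun i => by
    have := hx (i + 1); rw [pow_succ'] at this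
    intro h; exact this (by rw [← h]; ring)
  have hm : Multipliable fun n : ℕ => 1 - q ^ (n + 1) * x :=
    (multipliable_aux hq hx').congr fun n => by rw [pow_succ']; ring
  rw [qPoch, tprod_eq_zero_mul' hm, pow_zero, one_mul, qPoch]
  congr 1
  exact tprod_congr fun n => by rw [pow_succ']; ring

lemma qPoch_pair {x q : ℂ} (hq : ‖q‖ < 1) (h1 : ∀ i : ℕ, 1 - q ^ i * x ≠ 0)
    (h2 : ∀ i : ℕ, 1 - q ^ i * (-x) ≠ 0) :
    qPoch x q * qPoch (-x) q = qPoch (x ^ 2) (q ^ 2) := by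
  rw [qPoch, qPoch, ← Multipliable.tprod_mul (multipliable_aux hq h1) (multipliable_aux hq h2), qPoch]
  exact tprod_congr fun n => by
    calc (1 - q ^ n * x) * (1 - q ^ n * -x) = 1 - (q ^ n) ^ 2 * x ^ 2 := by ring
      _ = 1 - (q ^ 2) ^ n * x ^ 2 := by rw [← pow_mul, ← pow_mul, Nat.mul_comm]

lemma jtheta_symm {x Q : ℂ} (hx : x ≠ 0) (hQ : Q ≠ 0) : jtheta (Q / x) Q = jtheta x Q := by
  have h : Q / (Q / x) = x := by field_simp
  rw [jtheta, jtheta, h]; ring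

lemma fac_ne {q y : ℂ} (hq : ‖q‖ < 1) (hy : ‖y‖ < 1) : ∀ n : ℕ, (1 : ℂ) - q ^ n * y ≠ 0 :=
  fun n => one_sub_ne_of_norm_lt (by
    rw [norm_mul, norm_pow]
    have h1 : ‖q‖ ^ n ≤ 1 := pow_le_one₀ (norm_nonneg _) hq.le
    nlinarith [norm_nonneg y, pow_nonneg (norm_nonneg q) n])

lemma jtheta_flip {q : ℂ} (hq0 : q ≠ 0) {a b : ℕ} (hab : a + b = 120) :
    jtheta (-(q ^ b)) (q ^ 120) = jtheta (-(q ^ a)) (q ^ 120) := by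
  have hx : (-(q ^ a) : ℂ) ≠ 0 := neg_ne_zero.2 (pow_ne_zero _ hq0)
  have hQ : (q ^ 120 : ℂ) ≠ 0 := pow_ne_zero _ hq0
  have h : q ^ 120 / (-(q ^ a)) = -(q ^ b) := by
    rw [div_neg, ← hab, pow_add, mul_div_cancel_left₀ _ (pow_ne_zero a hq0)]
  rw [← h, jtheta_symm hx hQ]

lemma one_sub_I_ne : (1 : ℂ) - I ≠ 0 := by
  intro h
  have := congrArg Complex.im h
  simp at this

lemma jtheta_I {q : ℂ} (hq : ‖q‖ < 1) :
    jtheta I q = (1 - I) * (qPoch (-(q ^ 2)) (q ^ 2) * qPoch q q) := by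
  have hnqI : ‖q * I‖ < 1 := by rwa [norm_mul, Complex.norm_I, mul_one]
  have hxI : ∀ n : ℕ, (1 : ℂ) - q ^ n * I ≠ 0 := by
    intro n
    cases n with
    | zero => simpa using one_sub_I_ne
    | succ m =>
        apply one_sub_ne_of_norm_lt
        rw [norm_mul, norm_pow, Complex.norm_I, mul_one]
        exact pow_lt_one₀ (norm_nonneg _) hq (Nat.succ_ne_zero m)
  have hqI : q / I = -(q * I) := by rw [div_eq_mul_inv, Complex.inv_I]; ring
  have hpair := qPoch_pair (x := q * I) hq (fac_ne hq hnqI)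
    (fac_ne hq (by rwa [norm_neg]))
  have hsq : ((q * I) ^ 2 : ℂ) = -(q ^ 2) := by rw [mul_pow, Complex.I_sq]; ring
  rw [hsq] at hpair
  rw [jtheta, hqI, qPoch_shift hq hxI, ← hpair]
  ring

lemma J4_split {q : ℂ} (hq : ‖q‖ < 1) :
    qPoch (q ^ 2) (q ^ 2) * qPoch (-(q ^ 2)) (q ^ 2) = qPoch (q ^ 4) (q ^ 4) := by
  have hq2 : ‖q ^ 2‖ < 1 := by
    rw [norm_pow]; nlinarith [norm_nonneg q]
  have h := qPoch_pair (x := q ^ 2) (q := q ^ 2) hq2 (fac_ne hq2 hq2)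
    (fac_ne hq2 (by rwa [norm_neg]))
  rw [← pow_mul] at h
  norm_num at h
  exact h

lemma key_quot {q : ℂ} (hq : ‖q‖ < 1) :
    (1 - I) / jtheta I q
      = qPoch (q ^ 2) (q ^ 2) / (qPoch q q * qPoch (q ^ 4) (q ^ 4)) := by
  have hq2 : ‖q ^ 2‖ < 1 := by
    rw [norm_pow]; nlinarith [norm_nonneg q]
  have hJ1 : qPoch q q ≠ 0 := qPoch_ne_zero hq (fac_ne hq hq)
  have hJ2 : qPoch (q ^ 2) (q ^ 2) ≠ 0 := qPoch_ne_zero hq2 (fac_ne hq2 hq2)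
  have hP : qPoch (-(q ^ 2)) (q ^ 2) ≠ 0 :=
    qPoch_ne_zero hq2 (fac_ne hq2 (by rwa [norm_neg]))
  rw [jtheta_I hq, ← J4_split hq, div_mul_cancel_left₀ one_sub_I_ne]
  field_simp

end AuxChi512

theorem chi512_eval_at_i (τ : ℂ) (hτ : 0 < τ.im) (r : ℕ) (hr : r ≤ 5) :
    chi512 τ r Complex.I
      = (-1 : ℂ) ^ kappa r * qpow τ (-(1 / 8) + 5 * (2 * r + 1) ^ 2 / 48)
          * jtheta (-(qpow τ 1) ^ (10 * r + 65)) ((qpow τ 1) ^ 120)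
          * (qPoch ((qpow τ 1) ^ 2) ((qpow τ 1) ^ 2)
              / (qPoch (qpow τ 1) (qpow τ 1)
                  * qPoch ((qpow τ 1) ^ 4) ((qpow τ 1) ^ 4))) := by
  have hq0 : qpow τ 1 ≠ 0 := Complex.exp_ne_zero _
  have hqn : ‖qpow τ 1‖ < 1 := by
    rw [qpow, Complex.norm_exp]
    rw [Real.exp_lt_one_iff]
    have : (2 * (Real.pi : ℂ) * I * 1 * τ).re = -(2 * Real.pi * τ.im) := by
      simp [Complex.mul_re, Complex.mul_im]
      try ring
    rw [this]
    have := Real.pi_pos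
    nlinarith
  have h12 : (I : ℂ) ^ (-12 : ℤ) = 1 := by
    rw [show (-12 : ℤ) = -(12 : ℕ) by norm_num, zpow_neg, zpow_natCast,
      show (12 : ℕ) = 4 * 3 from rfl, pow_mul, Complex.I_pow_four, one_pow, inv_one]
  simp only [chi512, h12, mul_one]
  interval_cases r
  all_goals norm_num [kappa, zpow_ofNat]
  · rw [jtheta_flip hq0 (show 65 + 55 = 120 by norm_num), ← key_quot hqn]
    ring
  · rw [jtheta_flip hq0 (show 75 + 45 = 120 by norm_num), ← key_quot hqn]
    have hs : -(Complex.I * (1 - Complex.I ^ 3)) = 1 - Complex.I := by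
      linear_combination (Complex.I ^ 2 - 1) * Complex.I_sq
    linear_combination (qpow τ (13 / 16) * jtheta (-qpow τ 1 ^ 75) (qpow τ 1 ^ 120)
      / jtheta Complex.I (qpow τ 1)) * hs
      + (-(Complex.I ^ 2) * (qpow τ (13 / 16) * jtheta (-qpow τ 1 ^ 75) (qpow τ 1 ^ 120)
      / jtheta Complex.I (qpow τ 1))) * Complex.I_sq
  · rw [jtheta_flip hq0 (show 85 + 35 = 120 by norm_num), ← key_quot hqn]
    have hs : (1 : ℂ) - Complex.I ^ 5 = 1 - Complex.I := by
      simp [pow_succ, Complex.I_mul_I]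
    linear_combination (-(qpow τ (119 / 48) * jtheta (-qpow τ 1 ^ 85) (qpow τ 1 ^ 120))
      / jtheta Complex.I (qpow τ 1)) * hs
  · rw [jtheta_flip hq0 (show 95 + 25 = 120 by norm_num), ← key_quot hqn]
    have hs : (Complex.I ^ 3)⁻¹ * (1 - Complex.I ^ 7) = -(1 - Complex.I) := by
      rw [show (Complex.I ^ 3 : ℂ) = -Complex.I by
        linear_combination Complex.I * Complex.I_sq, inv_neg, Complex.inv_I, neg_neg]
      linear_combination (1 - Complex.I ^ 2 + Complex.I ^ 4 - Complex.I ^ 6) * Complex.I_sq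
    linear_combination (qpow τ (239 / 48) * jtheta (-qpow τ 1 ^ 95) (qpow τ 1 ^ 120)
      / jtheta Complex.I (qpow τ 1)) * hs
      + ((qpow τ (239 / 48) * jtheta (-qpow τ 1 ^ 95) (qpow τ 1 ^ 120)
      / jtheta Complex.I (qpow τ 1)) * (Complex.I⁻¹ ^ 2 - Complex.I⁻¹ * Complex.I + Complex.I ^ 2)
        * (Complex.I ^ 7 - 1)) * Complex.inv_I
      + ((qpow τ (239 / 48) * jtheta (-qpow τ 1 ^ 95) (qpow τ 1 ^ 120)
      / jtheta Complex.I (qpow τ 1)) * (Complex.I - Complex.I ^ 8)) * Complex.I_sq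
  · rw [jtheta_flip hq0 (show 105 + 15 = 120 by norm_num), ← key_quot hqn]
    have hs : (1 : ℂ) - Complex.I ^ 9 = 1 - Complex.I := by
      simp [pow_succ, Complex.I_mul_I]
    linear_combination (qpow τ (133 / 16) * jtheta (-qpow τ 1 ^ 105) (qpow τ 1 ^ 120)
      / jtheta Complex.I (qpow τ 1)) * hs
  · rw [jtheta_flip hq0 (show 115 + 5 = 120 by norm_num), ← key_quot hqn]
    have hs : (Complex.I ^ 5)⁻¹ * (1 - Complex.I ^ 11) = 1 - Complex.I := by
      rw [show (Complex.I ^ 5 : ℂ) = Complex.I by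
        linear_combination (Complex.I ^ 3 - Complex.I) * Complex.I_sq, Complex.inv_I]
      linear_combination (Complex.I ^ 10 - Complex.I ^ 8 + Complex.I ^ 6 - Complex.I ^ 4
        + Complex.I ^ 2 - 1) * Complex.I_sq
    linear_combination (qpow τ (599 / 48) * jtheta (-qpow τ 1 ^ 115) (qpow τ 1 ^ 120)
      / jtheta Complex.I (qpow τ 1)) * hs
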